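/- For any DAG G on vertex set V = {1,...,p} and Γ the matrix of causal tail coefficients of a heavy-tailed linear SCM with DAG G, the EASE algorithm (extremal ancestral search) returns a permutation π that is a causal order of G: for all i, j with i an ancestor of j, π(i) < π(j). -/

import Mathlib

open Filter Topology

variable {p : ℕ}

/-- The score minimized by EASE at a given step: the maximum of the causal tail
coefficients `Γ j i` over the remaining nodes `j ≠ i` (with `⊥` for an empty set). -/
noncomputable def easeScore (Γ : Fin p → Fin p → ℝ) (S : Finset (Fin p)) (i : Fin p) :
    WithBot ℝ :=
  (S.erase i).sup (fun j => (Γ j i : WithBot ℝ))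

/-- If `σ s` is the node selected by EASE at step `s`, the set of nodes still
remaining at step `s`. -/
def easeRemaining (σ : Equiv.Perm (Fin p)) (s : Fin p) : Finset (Fin p) :=
  Finset.univ.filter (fun i => s ≤ σ.symm i)

/-- `σ` records a run of the EASE greedy algorithm on `Γ`: at every step `s`, the node
`σ s` chosen at step `s` minimizes the score among all remaining nodes. -/
def IsEASERun (Γ : Fin p → Fin p → ℝ) (σ : Equiv.Perm (Fin p)) : Prop :=
  ∀ s i, i ∈ easeRemaining σ s →
    easeScore Γ (easeRemaining σ s) (σ s) ≤ easeScore Γ (easeRemaining σ s) i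


private lemma exists_anc_min (anc : Fin p → Fin p → Prop)
    (htrans : ∀ i j k, anc i j → anc j k → anc i k)
    (hirrefl : ∀ i, ¬ anc i i) :
    ∀ (S : Finset (Fin p)), S.Nonempty → ∃ m ∈ S, ∀ k ∈ S, ¬ anc k m := by
  classical
  intro S
  induction S using Finset.strongInduction with
  | _ S ih =>
    intro hS
    obtain ⟨x, hx⟩ := hS
    by_cases h : ∃ k ∈ S, anc k x
    · obtain ⟨k0, hk0, hk0x⟩ := h
      set S' := S.filter (fun k => anc k x) with hS'
      have hsub : S' ⊂ S := by
        refine Finset.filter_ssubset.mpr ⟨x, hx, hirrefl x⟩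
      obtain ⟨m, hm, hmin⟩ := ih S' hsub ⟨k0, by simp [hS', hk0, hk0x]⟩
      have hmS : m ∈ S := (Finset.mem_filter.mp hm).1
      have hmx : anc m x := (Finset.mem_filter.mp hm).2
      refine ⟨m, hmS, fun k hk hkm => ?_⟩
      exact hmin k (Finset.mem_filter.mpr ⟨hk, htrans k m x hkm hmx⟩) hkm
    · exact ⟨x, hx, fun k hk hkx => h ⟨k, hk, hkx⟩⟩

theorem ease_returns_causal_order
    -- the strict ancestor relation of the DAG on nodes {1,...,p}
    (anc : Fin p → Fin p → Prop)
    (htrans : ∀ i j k, anc i j → anc j k → anc i k)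
    (hirrefl : ∀ i, ¬ anc i i)
    -- the matrix of causal tail coefficients of a heavy-tailed linear SCM with this DAG
    (Γ : Fin p → Fin p → ℝ)
    (hΓ : ∀ j i, j ≠ i → (anc j i → Γ j i = 1) ∧ (¬ anc j i → Γ j i < 1))
    -- a run of the EASE algorithm, returning the permutation σ.symm
    (σ : Equiv.Perm (Fin p)) (hrun : IsEASERun Γ σ) :
    ∀ i j, anc i j → σ.symm i < σ.symm j := by
  intro i j hij
  classical
  by_contra hlt
  push_neg at hlt
  set s := σ.symm j with hs
  have hjrem : j ∈ easeRemaining σ s := by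
    simp [easeRemaining, hs]
  have hirem : i ∈ easeRemaining σ s := by
    simp [easeRemaining, hs, hlt]
    exact hlt
  have hij' : i ≠ j := fun h => hirrefl j (h ▸ hij)
  have hσs : σ s = j := by
    simp [hs]
  -- score at j is ≥ 1
  have hscorej : (1 : WithBot ℝ) ≤ easeScore Γ (easeRemaining σ s) j := by
    have hmem : i ∈ (easeRemaining σ s).erase j := Finset.mem_erase.mpr ⟨hij', hirem⟩
    have h1 : Γ i j = 1 := (hΓ i j hij').1 hij
    calc (1 : WithBot ℝ) = (Γ i j : WithBot ℝ) := by rw [h1]; rfl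
      _ ≤ _ := Finset.le_sup (f := fun k => (Γ k j : WithBot ℝ)) hmem
  -- take a minimal remaining node m
  obtain ⟨m, hmrem, hmmin⟩ := exists_anc_min anc htrans hirrefl (easeRemaining σ s) ⟨j, hjrem⟩
  have hscorem : easeScore Γ (easeRemaining σ s) m < 1 := by
    apply (Finset.sup_lt_iff (by exact_mod_cast WithBot.bot_lt_coe (1:ℝ) : (⊥ : WithBot ℝ) < 1)).mpr
    intro k hk
    obtain ⟨hkm, hkrem⟩ := Finset.mem_erase.mp hk
    have := (hΓ k m hkm).2 (hmmin k hkrem)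
    exact_mod_cast this
  have := hrun s m hmrem
  rw [hσs] at this
  exact absurd (hscorej.trans this) (not_le.mpr hscorem)
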